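/- Define f : (1/2, 1) → ℝ by f(t) = 2·log((√(5t²−1) + 2t²)/((2t−1)(1−t))). Then f is differentiable on (1/2, 1) and t₀ = 3√5/10 is its unique critical point: f′(t) = 0 for t ∈ (1/2, 1) if and only if t = 3√5/10. -/

import Mathlib

open Real

theorem unique_critical_point :
    (∀ t ∈ Set.Ioo (1/2 : ℝ) 1,
        DifferentiableAt ℝ (fun t : ℝ => 2 * log ((Real.sqrt (5 * t ^ 2 - 1) + 2 * t ^ 2) /
          ((2 * t - 1) * (1 - t)))) t) ∧
    (∀ t ∈ Set.Ioo (1/2 : ℝ) 1,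
        deriv (fun t : ℝ => 2 * log ((Real.sqrt (5 * t ^ 2 - 1) + 2 * t ^ 2) /
          ((2 * t - 1) * (1 - t)))) t = 0 ↔ t = 3 * Real.sqrt 5 / 10) := by
  have key : ∀ t ∈ Set.Ioo (1/2 : ℝ) 1,
      HasDerivAt (fun t : ℝ => 2 * log ((Real.sqrt (5 * t ^ 2 - 1) + 2 * t ^ 2) /
        ((2 * t - 1) * (1 - t))))
      (2 * ((((10 * t / (2 * Real.sqrt (5 * t ^ 2 - 1)) + 2 * (2 * t ^ 1)) *
        ((2 * t - 1) * (1 - t)) - (Real.sqrt (5 * t ^ 2 - 1) + 2 * t ^ 2) *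
        (2 * (1 - t) + (2 * t - 1) * (-1))) /
        ((2 * t - 1) * (1 - t)) ^ 2) /
        ((Real.sqrt (5 * t ^ 2 - 1) + 2 * t ^ 2) / ((2 * t - 1) * (1 - t))))) t := by
    rintro t ⟨ht1, ht2⟩
    have hq : (0:ℝ) < 5 * t ^ 2 - 1 := by nlinarith
    have hspos : 0 < Real.sqrt (5 * t ^ 2 - 1) := Real.sqrt_pos.mpr hq
    have hD : (0:ℝ) < (2 * t - 1) * (1 - t) := by nlinarith
    have hN : (0:ℝ) < Real.sqrt (5 * t ^ 2 - 1) + 2 * t ^ 2 := by nlinarith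
    have h1 : HasDerivAt (fun t : ℝ => 5 * t ^ 2 - 1) (10 * t) t := by
      have := ((hasDerivAt_pow 2 t).const_mul (5:ℝ)).sub_const 1
      refine this.congr_deriv ?_
      ring
    have h2 := h1.sqrt (ne_of_gt hq)
    have h3 : HasDerivAt (fun t : ℝ => Real.sqrt (5 * t ^ 2 - 1) + 2 * t ^ 2)
        (10 * t / (2 * Real.sqrt (5 * t ^ 2 - 1)) + 2 * (2 * t ^ 1)) t :=
      h2.add ((hasDerivAt_pow 2 t).const_mul 2)
    have h4 : HasDerivAt (fun t : ℝ => (2 * t - 1) * (1 - t))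
        (2 * (1 - t) + (2 * t - 1) * (-1)) t := by
      have ha : HasDerivAt (fun t : ℝ => 2 * t - 1) 2 t := by
        simpa using ((hasDerivAt_id t).const_mul (2:ℝ)).sub_const 1
      have hb : HasDerivAt (fun t : ℝ => 1 - t) (-1) t := by
        simpa using (hasDerivAt_id t).const_sub 1
      exact ha.mul hb
    have h5 := h3.div h4 (ne_of_gt hD)
    have h6 := h5.log (div_ne_zero (ne_of_gt hN) (ne_of_gt hD))
    exact h6.const_mul 2
  constructor
  · intro t ht
    exact (key t ht).differentiableAt
  · rintro t ht
    obtain ⟨ht1, ht2⟩ := ht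
    rw [(key t ⟨ht1, ht2⟩).deriv]
    have hq : (0:ℝ) < 5 * t ^ 2 - 1 := by nlinarith
    have hspos : 0 < Real.sqrt (5 * t ^ 2 - 1) := Real.sqrt_pos.mpr hq
    have hD : (0:ℝ) < (2 * t - 1) * (1 - t) := by nlinarith
    have hN : (0:ℝ) < Real.sqrt (5 * t ^ 2 - 1) + 2 * t ^ 2 := by nlinarith
    have hzero : (2 * ((((10 * t / (2 * Real.sqrt (5 * t ^ 2 - 1)) + 2 * (2 * t ^ 1)) *
        ((2 * t - 1) * (1 - t)) - (Real.sqrt (5 * t ^ 2 - 1) + 2 * t ^ 2) *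
        (2 * (1 - t) + (2 * t - 1) * (-1))) /
        ((2 * t - 1) * (1 - t)) ^ 2) /
        ((Real.sqrt (5 * t ^ 2 - 1) + 2 * t ^ 2) / ((2 * t - 1) * (1 - t)))) = 0) ↔
        ((10 * t / (2 * Real.sqrt (5 * t ^ 2 - 1)) + 2 * (2 * t ^ 1)) *
        ((2 * t - 1) * (1 - t)) - (Real.sqrt (5 * t ^ 2 - 1) + 2 * t ^ 2) *
        (2 * (1 - t) + (2 * t - 1) * (-1)) = 0) := by
      have hrw : 2 * ((((10 * t / (2 * Real.sqrt (5 * t ^ 2 - 1)) + 2 * (2 * t ^ 1)) *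
          ((2 * t - 1) * (1 - t)) - (Real.sqrt (5 * t ^ 2 - 1) + 2 * t ^ 2) *
          (2 * (1 - t) + (2 * t - 1) * (-1))) /
          ((2 * t - 1) * (1 - t)) ^ 2) /
          ((Real.sqrt (5 * t ^ 2 - 1) + 2 * t ^ 2) / ((2 * t - 1) * (1 - t)))) =
          ((10 * t / (2 * Real.sqrt (5 * t ^ 2 - 1)) + 2 * (2 * t ^ 1)) *
          ((2 * t - 1) * (1 - t)) - (Real.sqrt (5 * t ^ 2 - 1) + 2 * t ^ 2) *
          (2 * (1 - t) + (2 * t - 1) * (-1))) *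
          (2 / (((2 * t - 1) * (1 - t)) * (Real.sqrt (5 * t ^ 2 - 1) + 2 * t ^ 2))) := by
        rw [div_div_div_eq, ← mul_div_assoc, ← mul_div_assoc]
        rw [div_eq_div_iff (by positivity) (by positivity)]
        ring
      rw [hrw, mul_eq_zero]
      constructor
      · rintro (h | h)
        · exact h
        · exact absurd h (by positivity)
      · exact fun h => Or.inl h
    rw [hzero]
    constructor
    · -- forward
      intro hE
      set s := Real.sqrt (5 * t ^ 2 - 1) with hs_def
      have hs2 : s ^ 2 = 5 * t ^ 2 - 1 := Real.sq_sqrt hq.le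
      field_simp at hE
      have eq1 : 4 * t * (3 * t - 2) * s = 2 * (-10 * t ^ 3 + 9 * t - 3) := by
        linear_combination hE + (6 - 8 * t) * hs2
      have hsq : (4 * t * (3 * t - 2)) ^ 2 * (5 * t ^ 2 - 1) =
          (2 * (-10 * t ^ 3 + 9 * t - 3)) ^ 2 := by
        linear_combination (4 * t * (3 * t - 2) * s + 2 * (-10 * t ^ 3 + 9 * t - 3)) * eq1
          - (4 * t * (3 * t - 2)) ^ 2 * hs2
      have hfac : (20 * t ^ 2 - 9) * ((2 * t - 1) * (t - 1)) ^ 2 = 0 := by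
        linear_combination (1/4) * hsq
      have hne : ((2 * t - 1) * (t - 1)) ^ 2 ≠ 0 := by
        apply pow_ne_zero
        apply mul_ne_zero <;> intro h <;> nlinarith
      have h20 : 20 * t ^ 2 = 9 := by
        rcases mul_eq_zero.mp hfac with h | h
        · linarith
        · exact absurd h hne
      have h5 : Real.sqrt 5 ^ 2 = 5 := Real.sq_sqrt (by norm_num)
      have hfac2 : (t - 3 * Real.sqrt 5 / 10) * (t + 3 * Real.sqrt 5 / 10) = 0 := by
        linear_combination (1/20) * h20 - (9/100) * h5
      rcases mul_eq_zero.mp hfac2 with h | h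
      · linarith
      · nlinarith [Real.sqrt_nonneg 5]
    · -- backward
      intro hteq
      have h5 : Real.sqrt 5 ^ 2 = 5 := Real.sq_sqrt (by norm_num)
      have hs' : Real.sqrt (5 * t ^ 2 - 1) = Real.sqrt 5 / 2 := by
        rw [show 5 * t ^ 2 - 1 = (Real.sqrt 5 / 2) ^ 2 by
          rw [hteq]; linear_combination (9/20 - 1/4) * h5]
        exact Real.sqrt_sq (by positivity)
      have h5pos : (0:ℝ) < Real.sqrt 5 := Real.sqrt_pos.mpr (by norm_num)
      rw [hs', hteq]
      field_simp
      linear_combination 1200 * h5
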